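/- Regret bound for the exponential weights (online lazy mirror ascent): Let K ≥ 1, T ≥ 1, let (C_t)_{t=1}^T be nonnegative reals, let (f_t)_{t=1}^T be vectors in ℝ^K with 0 ≤ f_{t,a} ≤ C_t for all t and a, and let (η_t)_{t=1}^T be positive and non-increasing. Let (w_t) be the exponential weights iterates. Then for every w* ∈ Σ_K: Σ_{t=1}^T f_t·(w* − w_t) ≤ log(K)/η_T + Σ_{t=1}^T 2·η_t·C_t². -/

import Mathlib

lemma aux_exp_quad {x : ℝ} (h0 : 0 ≤ x) (h1 : x ≤ 1) : Real.exp x ≤ 1 + x + x ^ 2 := by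
  have h := Real.exp_bound' h0 h1 (n := 3) (by norm_num)
  simp [Finset.sum_range_succ, Nat.factorial] at h
  nlinarith [pow_le_pow_left₀ h0 h1 3, sq_nonneg x, pow_nonneg h0 3]

lemma aux_jensen {ι : Type*} (s : Finset ι) (hs : s.Nonempty) (y : ι → ℝ)
    (hy : ∀ i ∈ s, 0 ≤ y i) {p : ℝ} (hp0 : 0 < p) (hp1 : p ≤ 1) :
    ∑ i ∈ s, y i ^ p ≤ (s.card : ℝ) * ((∑ i ∈ s, y i) / s.card) ^ p := by
  have hcard : (0:ℝ) < s.card := by exact_mod_cast Finset.card_pos.2 hs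
  have key := Real.arith_mean_le_rpow_mean s (fun _ => 1 / (s.card:ℝ)) (fun i => y i ^ p)
    (fun i _ => by positivity) (by simp [Finset.sum_div]; field_simp)
    (fun i _ => Real.rpow_nonneg (hy i ‹_›) p) (p := 1/p)
    (by rw [le_div_iff₀ hp0]; linarith)
  simp only [one_div_one_div] at key
  have hyq : ∀ i ∈ s, 1 / (s.card:ℝ) * (y i ^ p) ^ (1/p) = 1/(s.card:ℝ) * y i := fun i hi => by
    rw [← Real.rpow_mul (hy i hi), mul_one_div_cancel hp0.ne', Real.rpow_one]
  rw [Finset.sum_congr rfl hyq] at key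
  have e1 : ∑ i ∈ s, 1/(s.card:ℝ) * y i ^ p = (∑ i ∈ s, y i ^ p) / s.card := by
    rw [Finset.sum_div]; exact Finset.sum_congr rfl fun i _ => by ring
  have e2 : ∑ i ∈ s, 1/(s.card:ℝ) * y i = (∑ i ∈ s, y i) / s.card := by
    rw [Finset.sum_div]; exact Finset.sum_congr rfl fun i _ => by ring
  rw [e1, e2] at key
  calc ∑ i ∈ s, y i ^ p = (s.card:ℝ) * ((∑ i ∈ s, y i ^ p) / s.card) := by field_simp
  _ ≤ (s.card:ℝ) * ((∑ i ∈ s, y i) / s.card) ^ p := by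
      exact mul_le_mul_of_nonneg_left key hcard.le

lemma aux_mono {K : ℕ} (hK : 1 ≤ K) (G : Fin K → ℝ) {e e' : ℝ} (he' : 0 < e') (hee : e' ≤ e) :
    (Real.log (∑ a, Real.exp (e' * G a)) - Real.log K) / e' ≤
      (Real.log (∑ a, Real.exp (e * G a)) - Real.log K) / e := by
  haveI : Nonempty (Fin K) := ⟨⟨0, hK⟩⟩
  have he : (0:ℝ) < e := he'.trans_le hee
  have hZ : (0:ℝ) < ∑ a, Real.exp (e * G a) :=
    Finset.sum_pos (fun a _ => Real.exp_pos _) Finset.univ_nonempty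
  set p : ℝ := e' / e with hp
  have hp0 : 0 < p := div_pos he' he
  have hp1 : p ≤ 1 := (div_le_one he).2 hee
  have hpow : ∀ a : Fin K, (Real.exp (e * G a)) ^ p = Real.exp (e' * G a) := by
    intro a
    rw [Real.rpow_def_of_pos (Real.exp_pos _), Real.log_exp, hp]
    congr 1
    field_simp
  have key := aux_jensen Finset.univ Finset.univ_nonempty (fun a => Real.exp (e * G a))
    (fun a _ => (Real.exp_pos _).le) hp0 hp1
  simp only [Finset.card_univ, Fintype.card_fin] at key
  rw [show (∑ i, (Real.exp (e * G i)) ^ p) = ∑ i, Real.exp (e' * G i) from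
    Finset.sum_congr rfl fun a _ => hpow a] at key
  have hKpos : (0:ℝ) < K := by exact_mod_cast hK
  have hlog : Real.log (∑ a, Real.exp (e' * G a)) - Real.log K ≤
      p * (Real.log (∑ a, Real.exp (e * G a)) - Real.log K) := by
    have h1 : Real.log (∑ a, Real.exp (e' * G a)) ≤
        Real.log ((K:ℝ) * ((∑ a, Real.exp (e * G a)) / K) ^ p) :=
      Real.log_le_log (Finset.sum_pos (fun a _ => Real.exp_pos _) Finset.univ_nonempty) key
    rw [Real.log_mul hKpos.ne' (by positivity), Real.log_rpow (by positivity),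
      Real.log_div hZ.ne' hKpos.ne'] at h1
    linarith [h1]
  rw [div_le_div_iff₀ he' he]
  have h2 := mul_le_mul_of_nonneg_right hlog he.le
  calc (Real.log (∑ a, Real.exp (e' * G a)) - Real.log K) * e
      ≤ p * (Real.log (∑ a, Real.exp (e * G a)) - Real.log K) * e := h2
    _ = (Real.log (∑ a, Real.exp (e * G a)) - Real.log K) * e' := by
        rw [hp]; field_simp

lemma aux_step {K : ℕ} (hK : 1 ≤ K) (G g : Fin K → ℝ) {e Cb : ℝ} (he : 0 < e)
    (hg : ∀ a, 0 ≤ g a ∧ g a ≤ Cb) :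
    (Real.log (∑ a, Real.exp (e * (G a + g a))) - Real.log (∑ a, Real.exp (e * G a))) / e ≤
      (∑ a, g a * (Real.exp (e * G a) / ∑ b, Real.exp (e * G b))) + 2 * e * Cb ^ 2 := by
  haveI : Nonempty (Fin K) := ⟨⟨0, hK⟩⟩
  have hZ : (0:ℝ) < ∑ a, Real.exp (e * G a) :=
    Finset.sum_pos (fun a _ => Real.exp_pos _) Finset.univ_nonempty
  have hZ2 : (0:ℝ) < ∑ a, Real.exp (e * (G a + g a)) :=
    Finset.sum_pos (fun a _ => Real.exp_pos _) Finset.univ_nonempty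
  set Z : ℝ := ∑ a, Real.exp (e * G a) with hZdef
  have hCb : 0 ≤ Cb := le_trans (hg ⟨0, hK⟩).1 (hg ⟨0, hK⟩).2
  set wf : ℝ := ∑ a, g a * (Real.exp (e * G a) / Z) with hwf
  have hwf0 : 0 ≤ wf :=
    Finset.sum_nonneg fun a _ => mul_nonneg (hg a).1 (div_nonneg (Real.exp_pos _).le hZ.le)
  have hsplit : ∀ a : Fin K, Real.exp (e * (G a + g a)) =
      Real.exp (e * G a) * Real.exp (e * g a) := fun a => by
    rw [← Real.exp_add]; ring_nf
  have hZwf : Z * wf = ∑ a, Real.exp (e * G a) * g a := by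
    rw [hwf, Finset.mul_sum]
    exact Finset.sum_congr rfl fun a _ => by field_simp
  rcases le_or_gt (e * Cb) 1 with hcase | hcase
  · -- small case
    have hsum : (∑ a, Real.exp (e * (G a + g a))) ≤ Z * (1 + e * wf + e^2 * Cb^2) := by
      have hb : ∀ a : Fin K, Real.exp (e * (G a + g a)) ≤
          Real.exp (e * G a) * (1 + e * g a + e^2 * Cb^2) := by
        intro a
        rw [hsplit a]
        have h1 : Real.exp (e * g a) ≤ 1 + e * g a + (e * g a)^2 :=
          aux_exp_quad (mul_nonneg he.le (hg a).1)
            (le_trans (mul_le_mul_of_nonneg_left (hg a).2 he.le) hcase)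
        have h2 : (e * g a)^2 ≤ e^2 * Cb^2 := by
          have h3 : g a ^ 2 ≤ Cb ^ 2 := pow_le_pow_left₀ (hg a).1 (hg a).2 2
          calc (e * g a)^2 = e^2 * g a ^2 := by ring
            _ ≤ e^2 * Cb^2 := mul_le_mul_of_nonneg_left h3 (sq_nonneg e)
        have := Real.exp_pos (e * G a)
        nlinarith
      calc (∑ a, Real.exp (e * (G a + g a))) ≤
          ∑ a, Real.exp (e * G a) * (1 + e * g a + e^2 * Cb^2) :=
            Finset.sum_le_sum fun a _ => hb a
        _ = Z * (1 + e * wf + e^2 * Cb^2) := by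
            rw [show Z * (1 + e * wf + e^2*Cb^2) = Z + e * (Z * wf) + Z * (e^2*Cb^2) by ring,
              hZwf, hZdef]
            simp only [Finset.mul_sum, Finset.sum_mul, ← Finset.sum_add_distrib]
            exact Finset.sum_congr rfl fun a _ => by ring
    have hpos : (0:ℝ) < 1 + e * wf + e^2 * Cb^2 := by positivity
    have hlog : Real.log (∑ a, Real.exp (e * (G a + g a))) - Real.log Z ≤
        e * wf + e^2 * Cb^2 := by
      have h1 := Real.log_le_log hZ2 hsum
      rw [Real.log_mul hZ.ne' hpos.ne'] at h1
      have h2 := Real.log_le_sub_one_of_pos hpos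
      linarith
    rw [div_le_iff₀ he]
    nlinarith [sq_nonneg (e * Cb)]
  · -- large case
    have hsum : (∑ a, Real.exp (e * (G a + g a))) ≤ Real.exp (e * Cb) * Z := by
      rw [hZdef, Finset.mul_sum]
      refine Finset.sum_le_sum fun a _ => ?_
      rw [hsplit a, mul_comm (Real.exp (e * Cb))]
      exact mul_le_mul_of_nonneg_left
        (Real.exp_le_exp.2 (mul_le_mul_of_nonneg_left (hg a).2 he.le)) (Real.exp_pos _).le
    have hlog : Real.log (∑ a, Real.exp (e * (G a + g a))) - Real.log Z ≤ e * Cb := by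
      have h1 := Real.log_le_log hZ2 hsum
      rw [Real.log_mul (Real.exp_pos _).ne' hZ.ne', Real.log_exp] at h1
      linarith
    rw [div_le_iff₀ he]
    nlinarith [mul_pos (lt_trans zero_lt_one hcase) (sub_pos.2 hcase), hwf0, he]


/-- regret bound for the exponential weights (online lazy mirror ascent). -/
theorem stmt8 (K T : ℕ) (hK : 1 ≤ K) (hT : 1 ≤ T)
    (C : ℕ → ℝ) (hC : ∀ t, 1 ≤ t → t ≤ T → 0 ≤ C t)
    (f : ℕ → Fin K → ℝ)
    (hf : ∀ t, 1 ≤ t → t ≤ T → ∀ a, 0 ≤ f t a ∧ f t a ≤ C t)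
    (η : ℕ → ℝ) (hη : ∀ t, 1 ≤ t → t ≤ T → 0 < η t)
    (hmono : ∀ s t, 1 ≤ s → s ≤ t → t ≤ T → η t ≤ η s)
    (w : ℕ → Fin K → ℝ)
    (hw : ∀ t a, 1 ≤ t → t ≤ T → w t a =
      Real.exp (η t * ∑ s ∈ Finset.Icc 1 (t - 1), f s a) /
        ∑ b, Real.exp (η t * ∑ s ∈ Finset.Icc 1 (t - 1), f s b))
    (wstar : Fin K → ℝ) (hws : wstar ∈ stdSimplex ℝ (Fin K)) :
    ∑ t ∈ Finset.Icc 1 T, ∑ a, f t a * (wstar a - w t a) ≤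
      Real.log K / η T + ∑ t ∈ Finset.Icc 1 T, 2 * η t * C t ^ 2 := by
  haveI : Nonempty (Fin K) := ⟨⟨0, hK⟩⟩
  set G : ℕ → Fin K → ℝ := fun t a => ∑ s ∈ Finset.Icc 1 t, f s a with hGdef
  set Φ : ℕ → ℝ := fun t =>
    (Real.log (∑ a, Real.exp (η t * G t a)) - Real.log K) / η t with hΦdef
  have hGsucc : ∀ t a, 1 ≤ t → G (t - 1) a + f t a = G t a := by
    intro t a ht
    obtain ⟨n, rfl⟩ : ∃ n, t = n + 1 := ⟨t - 1, by omega⟩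
    simp only [hGdef, Nat.add_sub_cancel]
    rw [Finset.sum_Icc_succ_top (by omega : 1 ≤ n + 1)]
  have hG0 : ∀ a, G 0 a = 0 := fun a => by simp [hGdef]
  have hlogK0 : Real.log (∑ a : Fin K, Real.exp (η 1 * G 0 a)) = Real.log K := by
    simp [hG0]
  -- per-step bound
  have hstep : ∀ t, 1 ≤ t → t ≤ T →
      (Real.log (∑ a, Real.exp (η t * G t a)) -
        Real.log (∑ a, Real.exp (η t * G (t - 1) a))) / η t ≤
      (∑ a, f t a * w t a) + 2 * η t * C t ^ 2 := by
    intro t ht1 ht2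
    have h := aux_step hK (G (t - 1)) (f t) (hη t ht1 ht2) (hf t ht1 ht2) (Cb := C t)
    have e1 : (∑ a, Real.exp (η t * (G (t - 1) a + f t a))) =
        ∑ a, Real.exp (η t * G t a) :=
      Finset.sum_congr rfl fun a _ => by rw [hGsucc t a ht1]
    have e2 : (∑ a, f t a * (Real.exp (η t * G (t - 1) a) /
        ∑ b, Real.exp (η t * G (t - 1) b))) = ∑ a, f t a * w t a :=
      Finset.sum_congr rfl fun a _ => by rw [hw t a ht1 ht2]
    rw [e1, e2] at h
    exact h
  -- telescoped potential bound
  have claim : ∀ t, 1 ≤ t → t ≤ T →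
      Φ t ≤ ∑ s ∈ Finset.Icc 1 t, ((∑ a, f s a * w s a) + 2 * η s * C s ^ 2) := by
    intro t ht1
    induction t, ht1 using Nat.le_induction with
    | base =>
      intro h1T
      have h := hstep 1 le_rfl h1T
      simp only [Nat.sub_self] at h
      rw [hlogK0] at h
      simpa [hΦdef] using h
    | succ t ht ih =>
      intro htT
      have htT' : t ≤ T := by omega
      have h1 := hstep (t + 1) (by omega) htT
      have h2 : (Real.log (∑ a, Real.exp (η (t + 1) * G t a)) - Real.log K) / η (t + 1) ≤
          Φ t := by
        exact aux_mono hK (G t) (hη (t + 1) (by omega) htT)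
          (hmono t (t + 1) ht (by omega) htT)
      have hΦ1 : Φ (t + 1) =
          (Real.log (∑ a, Real.exp (η (t + 1) * G (t + 1) a)) -
            Real.log (∑ a, Real.exp (η (t + 1) * G t a))) / η (t + 1) +
          (Real.log (∑ a, Real.exp (η (t + 1) * G t a)) - Real.log K) / η (t + 1) := by
        rw [hΦdef, ← add_div, sub_add_sub_cancel]
      rw [Finset.sum_Icc_succ_top (by omega : 1 ≤ t + 1)]
      have h1' : (Real.log (∑ a, Real.exp (η (t + 1) * G (t + 1) a)) -
          Real.log (∑ a, Real.exp (η (t + 1) * G t a))) / η (t + 1) ≤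
          (∑ a, f (t + 1) a * w (t + 1) a) + 2 * η (t + 1) * C (t + 1) ^ 2 := by
        have := h1; simp only [Nat.add_sub_cancel] at this; exact this
      have := ih htT'
      linarith [hΦ1 ▸ add_le_add h1' h2]
  -- final comparison
  obtain ⟨a₀, -, ha₀⟩ := Finset.exists_max_image Finset.univ (G T) Finset.univ_nonempty
  have hηT : 0 < η T := hη T hT le_rfl
  have hstar : ∑ a, wstar a * G T a ≤ G T a₀ := by
    calc ∑ a, wstar a * G T a ≤ ∑ a, wstar a * G T a₀ :=
          Finset.sum_le_sum fun a _ =>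
            mul_le_mul_of_nonneg_left (ha₀ a (Finset.mem_univ a)) (hws.1 a)
      _ = G T a₀ := by rw [← Finset.sum_mul, hws.2, one_mul]
  have hmax : G T a₀ ≤ Φ T + Real.log K / η T := by
    have h1 : Real.exp (η T * G T a₀) ≤ ∑ a, Real.exp (η T * G T a) :=
      Finset.single_le_sum (f := fun a => Real.exp (η T * G T a))
        (fun a _ => (Real.exp_pos _).le) (Finset.mem_univ a₀)
    have h2 := Real.log_le_log (Real.exp_pos _) h1
    rw [Real.log_exp] at h2
    rw [hΦdef]
    rw [← add_div, le_div_iff₀ hηT]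
    calc G T a₀ * η T = η T * G T a₀ := by ring
      _ ≤ Real.log (∑ a, Real.exp (η T * G T a)) := h2
      _ = Real.log (∑ a, Real.exp (η T * G T a)) - Real.log ↑K + Real.log ↑K := by ring
  -- rewrite LHS
  have hLHS : ∑ t ∈ Finset.Icc 1 T, ∑ a, f t a * (wstar a - w t a) =
      (∑ a, wstar a * G T a) - ∑ t ∈ Finset.Icc 1 T, ∑ a, f t a * w t a := by
    calc ∑ t ∈ Finset.Icc 1 T, ∑ a, f t a * (wstar a - w t a)
        = ∑ t ∈ Finset.Icc 1 T,
            ((∑ a, f t a * wstar a) - ∑ a, f t a * w t a) := by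
          refine Finset.sum_congr rfl fun t _ => ?_
          rw [← Finset.sum_sub_distrib]
          exact Finset.sum_congr rfl fun a _ => by ring
      _ = (∑ t ∈ Finset.Icc 1 T, ∑ a, f t a * wstar a) -
            ∑ t ∈ Finset.Icc 1 T, ∑ a, f t a * w t a := Finset.sum_sub_distrib _ _
      _ = (∑ a, wstar a * G T a) - ∑ t ∈ Finset.Icc 1 T, ∑ a, f t a * w t a := by
          congr 1
          rw [Finset.sum_comm]
          exact Finset.sum_congr rfl fun a _ => by
            rw [hGdef, Finset.mul_sum]
            exact Finset.sum_congr rfl fun t _ => by ring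
  rw [hLHS]
  have hsum := claim T hT le_rfl
  rw [Finset.sum_add_distrib] at hsum
  linarith
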